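/- There exist sequences A=(5,4,3,3,3,1) and B=(5,5,3,3,3,1) in good order with a_i ≤ b_i such that the interval pair (S;S), where S = 6,[5,6],4,3,3,1 is obtained from Ã=(6,5,4,3,3,1) and B̃=(6,6,4,3,3,1), is bipartite-interval realizable, yet (A;B) is not realizable by any simple graph. -/

import Mathlib

open Finset
open Classical

/-- The pair `(A;B)` is realizable by a simple graph: there is a simple graph `G`
on vertices `v_1, …, v_n` with `a i ≤ deg(v_i) ≤ b i` for `1 ≤ i ≤ n`.
(Sequences are 1-indexed; vertex `i : Fin n` corresponds to index `i+1`.) -/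
def Realizable (n : ℕ) (a b : ℕ → ℕ) : Prop :=
  ∃ (G : SimpleGraph (Fin n)) (_ : DecidableRel G.Adj),
    ∀ i : Fin n, a (i.1 + 1) ≤ G.degree i ∧ G.degree i ≤ b (i.1 + 1)

/-- `A` and `B` are in good order: `(a_{i+1}, b_{i+1}) ⪯ (a_i, b_i)` lexicographically. -/
def GoodOrder (n : ℕ) (a b : ℕ → ℕ) : Prop :=
  ∀ i, 1 ≤ i → i + 1 ≤ n →
    a (i + 1) < a i ∨ (a (i + 1) = a i ∧ b (i + 1) ≤ b i)

/-- The set `I_t = {i : t+1 ≤ i ≤ n, b i ≥ t+1}`. -/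
def Iset (n : ℕ) (b : ℕ → ℕ) (t : ℕ) : Finset ℕ :=
  (Finset.Icc (t + 1) n).filter fun i => t + 1 ≤ b i

/-- The parity correction `ε(t)` of Cai–Deng–Zang. -/
noncomputable def eps (n : ℕ) (a b : ℕ → ℕ) (t : ℕ) : ℤ :=
  if (∀ i ∈ Iset n b t, a i = b i) ∧
      Odd (∑ i ∈ Iset n b t, b i + t * (Iset n b t).card)
  then 1 else 0

/-- `berge n b i` is the `i`-th column sum of the `n × n` 0-1 matrix in which row `k`
has its `b k` leading entries equal to `1`, skipping the diagonal entry `(k,k)`. -/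
def berge (n : ℕ) (b : ℕ → ℕ) (i : ℕ) : ℕ :=
  ((Finset.Icc 1 n).filter fun k => k ≠ i ∧ (i ≤ b k ∨ (i = b k + 1 ∧ k ≤ b k))).card

/-- The conjugate sequence: `conj n b i = |{k : 1 ≤ k ≤ n, b k ≥ i}|`. -/
def conj (n : ℕ) (b : ℕ → ℕ) (i : ℕ) : ℕ :=
  ((Finset.Icc 1 n).filter fun k => i ≤ b k).card

/-- `g = max{i : c_i ≥ i}` (0 if there is no such index). -/
def gIdx (n : ℕ) (c : ℕ → ℕ) : ℕ :=
  ((Finset.Icc 1 n).filter fun i => i ≤ c i).sup id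

/-- The Ryser modification: `c̃_i = c_i + 1` for `i ≤ g`, and `c̃_i = c_i` otherwise. -/
def tilde (n : ℕ) (c : ℕ → ℕ) (i : ℕ) : ℕ :=
  if i ≤ gIdx n c then c i + 1 else c i

/-- `s = max{i : a_i ≥ i - 1}` (0 if there is no such index). -/
def sIdx (n : ℕ) (a : ℕ → ℕ) : ℕ :=
  ((Finset.Icc 1 n).filter fun i => i ≤ a i + 1).sup id

/-- The interval pair `(S;S)` is bipartite-interval realizable: there is a bipartite
graph `F` with parts `{x_1,…,x_n}`, `{y_1,…,y_n}` (modelled on `Fin n ⊕ Fin n`, all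
edges going between the parts) with `lo i ≤ deg(x_i) ≤ hi i` and `lo i ≤ deg(y_i) ≤ hi i`. -/
def BipIntervalRealizable (n : ℕ) (lo hi : ℕ → ℕ) : Prop :=
  ∃ (F : SimpleGraph (Fin n ⊕ Fin n)) (_ : DecidableRel F.Adj),
    (∀ u v, F.Adj u v → u.isLeft ≠ v.isLeft) ∧
    (∀ i : Fin n, lo (i.1 + 1) ≤ F.degree (Sum.inl i) ∧ F.degree (Sum.inl i) ≤ hi (i.1 + 1)) ∧
    (∀ i : Fin n, lo (i.1 + 1) ≤ F.degree (Sum.inr i) ∧ F.degree (Sum.inr i) ≤ hi (i.1 + 1))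

/-- The sequence `A = (5,4,3,3,3,1)`. -/
def aEx : ℕ → ℕ
  | 1 => 5 | 2 => 4 | 3 => 3 | 4 => 3 | 5 => 3 | 6 => 1 | _ => 0

/-- The sequence `B = (5,5,3,3,3,1)`. -/
def bEx : ℕ → ℕ
  | 1 => 5 | 2 => 5 | 3 => 3 | 4 => 3 | 5 => 3 | 6 => 1 | _ => 0

/-- The auxiliary sequence `Ã = (6,5,4,3,3,1)`. -/
def atEx : ℕ → ℕ
  | 1 => 6 | 2 => 5 | 3 => 4 | 4 => 3 | 5 => 3 | 6 => 1 | _ => 0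

/-- The auxiliary sequence `B̃ = (6,6,4,3,3,1)`. -/
def btEx : ℕ → ℕ
  | 1 => 6 | 2 => 6 | 3 => 4 | 4 => 3 | 5 => 3 | 6 => 1 | _ => 0


/-- Biadjacency matrix with row sums and column sums `(6,5,4,3,3,1)`. -/
def Mb : Fin 6 → Fin 6 → Bool :=
  fun i j => !![true,true,true,true,true,true;
                true,true,true,true,true,false;
                true,true,true,true,false,false;
                true,true,true,false,false,false;
                true,true,false,false,true,false;
                true,false,false,false,false,false] i j

/-- The bipartite witness graph on `Fin 6 ⊕ Fin 6`. -/
def Fb : SimpleGraph (Fin 6 ⊕ Fin 6) where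
  Adj u v := (match u, v with
    | .inl i, .inr j => Mb i j
    | .inr j, .inl i => Mb i j
    | _, _ => false) = true
  symm := ⟨by rintro (i|i) (j|j) h <;> simp_all⟩
  loopless := ⟨by rintro (i|i) h <;> simp at h⟩

instance : DecidableRel Fb.Adj := fun u v => by unfold Fb; infer_instance

lemma fb_bipartite : ∀ u v, Fb.Adj u v → u.isLeft ≠ v.isLeft := by
  rintro (i|i) (j|j) h <;> simp_all [Fb]

lemma fb_left : ∀ i : Fin 6,
    atEx (i.1 + 1) ≤ Fb.degree (Sum.inl i) ∧ Fb.degree (Sum.inl i) ≤ btEx (i.1 + 1) := by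
  decide

lemma fb_right : ∀ i : Fin 6,
    atEx (i.1 + 1) ≤ Fb.degree (Sum.inr i) ∧ Fb.degree (Sum.inr i) ≤ btEx (i.1 + 1) := by
  decide

lemma tilde_eq : ∀ i, 1 ≤ i → i ≤ 6 → tilde 6 aEx i = atEx i ∧ tilde 6 bEx i = btEx i := by
  intro i h1 h2
  interval_cases i <;> exact ⟨by decide, by decide⟩

/-- A vertex of full degree is adjacent to every other vertex. -/
lemma adj_of_full_degree {n : ℕ} (G : SimpleGraph (Fin (n+1))) [DecidableRel G.Adj]
    (v : Fin (n+1)) (hv : G.degree v = n) (w : Fin (n+1)) (hw : w ≠ v) : G.Adj v w := by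
  have hsub : G.neighborFinset v ⊆ Finset.univ.erase v := by
    intro u hu
    rw [SimpleGraph.mem_neighborFinset] at hu
    exact Finset.mem_erase.2 ⟨(G.ne_of_adj hu).symm, Finset.mem_univ u⟩
  have hcard : (Finset.univ.erase v).card ≤ (G.neighborFinset v).card := by
    rw [SimpleGraph.card_neighborFinset_eq_degree, hv, Finset.card_erase_of_mem (Finset.mem_univ v)]
    simp
  have heq := Finset.eq_of_subset_of_card_le hsub hcard
  have : w ∈ G.neighborFinset v := by
    rw [heq]; exact Finset.mem_erase.2 ⟨hw, Finset.mem_univ w⟩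
  rwa [SimpleGraph.mem_neighborFinset] at this

lemma not_realizable : ¬ Realizable 6 aEx bEx := by
  rintro ⟨G, hdec, h⟩
  have h0 := h 0
  have h1 := h 1
  have h2 := h 2
  have h3 := h 3
  have h4 := h 4
  have h5 := h 5
  simp [aEx, bEx] at h0 h1 h2 h3 h4 h5
  -- handshake: the degree sum is even
  have hsum := SimpleGraph.sum_degrees_eq_twice_card_edges G
  rw [Fin.sum_univ_six] at hsum
  have hd0 : G.degree 0 = 5 := le_antisymm h0.2 h0.1
  have hd1 : G.degree 1 = 5 := by omega
  -- vertices 0 and 1 are adjacent to every other vertex, in particular to 5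
  have ha0 : G.Adj 0 5 := adj_of_full_degree G 0 hd0 5 (by decide)
  have ha1 : G.Adj 1 5 := adj_of_full_degree G 1 hd1 5 (by decide)
  have hsub : ({0, 1} : Finset (Fin 6)) ⊆ G.neighborFinset 5 := by
    intro u hu
    rw [SimpleGraph.mem_neighborFinset]
    rcases Finset.mem_insert.1 hu with rfl | hu
    · exact ha0.symm
    · rw [Finset.mem_singleton] at hu; subst hu; exact ha1.symm
  have : 2 ≤ G.degree 5 := by
    rw [← SimpleGraph.card_neighborFinset_eq_degree]
    calc 2 = ({0, 1} : Finset (Fin 6)).card := by decide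
    _ ≤ _ := Finset.card_le_card hsub
  omega


/-- For `A=(5,4,3,3,3,1)`, `B=(5,5,3,3,3,1)` (in good order, `a_i ≤ b_i`), one has
`Ã=(6,5,4,3,3,1)`, `B̃=(6,6,4,3,3,1)`, the interval pair `(S;S)` is bipartite-interval
realizable, yet `(A;B)` is not realizable. -/
theorem bip_interval_not_sufficient :
    GoodOrder 6 aEx bEx ∧ (∀ i, 1 ≤ i → i ≤ 6 → aEx i ≤ bEx i) ∧
    (∀ i, 1 ≤ i → i ≤ 6 → tilde 6 aEx i = atEx i ∧ tilde 6 bEx i = btEx i) ∧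
    BipIntervalRealizable 6 (tilde 6 aEx) (tilde 6 bEx) ∧
    ¬ Realizable 6 aEx bEx := by
  refine ⟨?_, ?_, tilde_eq, ?_, not_realizable⟩
  · intro i h1 h2
    have h3 : i ≤ 5 := by omega
    interval_cases i <;> simp [aEx, bEx]
  · intro i h1 h2
    interval_cases i <;> decide
  · refine ⟨Fb, inferInstance, fb_bipartite, ?_, ?_⟩
    · intro i
      rcases tilde_eq (i.1 + 1) (by omega) (by omega) with ⟨ha, hb⟩
      rw [ha, hb]; exact fb_left i
    · intro i
      rcases tilde_eq (i.1 + 1) (by omega) (by omega) with ⟨ha, hb⟩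
      rw [ha, hb]; exact fb_right i
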